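/- Let 𝔸 be a cartesian strict monoidal category, [put ∣ get] : (A,A) → (B,B) a lens, and suppose B is inhabited by some k : I → B. If the lens is lawful (a comonoid homomorphism for the sequential-use comonoid structure) then it satisfies the three lens laws: GetPut (put ∘ Δ_A(1_A ⊗ get) = 1_A), PutGet (get ∘ put equals projection to B), and PutPut (put(put(a,b),b') = put(a,b')). -/

import Mathlib

open CategoryTheory MonoidalCategory
universe v u
variable (C : Type u) [Category.{v} C] [CartesianMonoidalCategory C]

structure OpticRep (A B X Y : C) where
  M : C
  fwd : A ⟶ M ⊗ X
  bwd : M ⊗ Y ⟶ B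

variable {C}

inductive OpticRel (A B X Y : C) : OpticRep C A B X Y → OpticRep C A B X Y → Prop
  | slide {M N : C} (f : M ⟶ N) (a : A ⟶ M ⊗ X) (b : N ⊗ Y ⟶ B) :
      OpticRel A B X Y ⟨N, a ≫ (f ▷ X), b⟩ ⟨M, a, (f ▷ Y) ≫ b⟩

def Optic (A B X Y : C) := Quot (OpticRel A B X Y)

def OpticRep.comp {A B X Y E F : C} (h : OpticRep C A B X Y) (k : OpticRep C X Y E F) :
    OpticRep C A B E F where
  M := h.M ⊗ k.M
  fwd := h.fwd ≫ (h.M ◁ k.fwd) ≫ (α_ h.M k.M E).inv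
  bwd := (α_ h.M k.M F).hom ≫ (h.M ◁ k.bwd) ≫ h.bwd

def OpticRep.id (A B : C) : OpticRep C A B A B :=
  ⟨𝟙_ C, (λ_ A).inv, (λ_ B).hom⟩

/-- The counit optic `ε_A : (A,A) → (I,I)` with residual `A`. -/
def epsRep (A : C) : OpticRep C A A (𝟙_ C) (𝟙_ C) :=
  ⟨A, (ρ_ A).inv, (ρ_ A).hom⟩

variable (C) in
/-- A representative of a 2-comb with outer boundary `X`/`Y` and teeth `(A₁,B₁)`, `(A₂,B₂)`. -/
structure Comb2Rep (X A₁ B₁ A₂ B₂ Y : C) where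
  M₁ : C
  M₂ : C
  f₁ : X ⟶ M₁ ⊗ A₁
  f₂ : M₁ ⊗ B₁ ⟶ M₂ ⊗ A₂
  f₃ : M₂ ⊗ B₂ ⟶ Y

/-- Sliding relations for 2-combs. -/
inductive Comb2Rel (X A₁ B₁ A₂ B₂ Y : C) :
    Comb2Rep C X A₁ B₁ A₂ B₂ Y → Comb2Rep C X A₁ B₁ A₂ B₂ Y → Prop
  | slide₁ {M₁ M₁' M₂ : C} (m : M₁ ⟶ M₁') (f₁ : X ⟶ M₁ ⊗ A₁) (f₂ : M₁' ⊗ B₁ ⟶ M₂ ⊗ A₂)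
      (f₃ : M₂ ⊗ B₂ ⟶ Y) :
      Comb2Rel X A₁ B₁ A₂ B₂ Y ⟨M₁', M₂, f₁ ≫ (m ▷ A₁), f₂, f₃⟩
        ⟨M₁, M₂, f₁, (m ▷ B₁) ≫ f₂, f₃⟩
  | slide₂ {M₁ M₂ M₂' : C} (m : M₂ ⟶ M₂') (f₁ : X ⟶ M₁ ⊗ A₁) (f₂ : M₁ ⊗ B₁ ⟶ M₂ ⊗ A₂)
      (f₃ : M₂' ⊗ B₂ ⟶ Y) :
      Comb2Rel X A₁ B₁ A₂ B₂ Y ⟨M₁, M₂', f₁, f₂ ≫ (m ▷ A₂), f₃⟩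
        ⟨M₁, M₂, f₁, f₂, (m ▷ B₂) ≫ f₃⟩

def Comb2 (X A₁ B₁ A₂ B₂ Y : C) := Quot (Comb2Rel X A₁ B₁ A₂ B₂ Y)

/-- The comultiplication 2-comb `Δ_A : (A,A) → (A,A);(A,A)` given by identities. -/
def deltaComb (A : C) : Comb2Rep C A A A A A A :=
  ⟨𝟙_ C, 𝟙_ C, (λ_ A).inv, (λ_ A).hom ≫ (λ_ A).inv, (λ_ A).hom⟩

/-- Fill the first tooth of a 2-comb with an optic. -/
def Comb2Rep.fill₁ {X A₁ B₁ A₂ B₂ Y P Q : C} (c : Comb2Rep C X A₁ B₁ A₂ B₂ Y)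
    (e : OpticRep C A₁ B₁ P Q) : Comb2Rep C X P Q A₂ B₂ Y where
  M₁ := c.M₁ ⊗ e.M
  M₂ := c.M₂
  f₁ := c.f₁ ≫ (c.M₁ ◁ e.fwd) ≫ (α_ c.M₁ e.M P).inv
  f₂ := (α_ c.M₁ e.M Q).hom ≫ (c.M₁ ◁ e.bwd) ≫ c.f₂
  f₃ := c.f₃

/-- Fill the second tooth of a 2-comb with an optic. -/
def Comb2Rep.fill₂ {X A₁ B₁ A₂ B₂ Y P Q : C} (c : Comb2Rep C X A₁ B₁ A₂ B₂ Y)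
    (e : OpticRep C A₂ B₂ P Q) : Comb2Rep C X A₁ B₁ P Q Y where
  M₁ := c.M₁
  M₂ := c.M₂ ⊗ e.M
  f₁ := c.f₁
  f₂ := c.f₂ ≫ (c.M₂ ◁ e.fwd) ≫ (α_ c.M₂ e.M P).inv
  f₃ := (α_ c.M₂ e.M Q).hom ≫ (c.M₂ ◁ e.bwd) ≫ c.f₃

/-- Close off a trivial first tooth `(I,I)`, yielding an optic. -/
def Comb2Rep.close₁ {X A₂ B₂ Y : C} (c : Comb2Rep C X (𝟙_ C) (𝟙_ C) A₂ B₂ Y) :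
    OpticRep C X Y A₂ B₂ :=
  ⟨c.M₂, c.f₁ ≫ c.f₂, c.f₃⟩

/-- Close off a trivial second tooth `(I,I)`, yielding an optic. -/
def Comb2Rep.close₂ {X A₁ B₁ Y : C} (c : Comb2Rep C X A₁ B₁ (𝟙_ C) (𝟙_ C) Y) :
    OpticRep C X Y A₁ B₁ :=
  ⟨c.M₁, c.f₁, c.f₂ ≫ c.f₃⟩

/-- Precompose a 2-comb with an optic on the outer boundary. -/
def opticThenComb {X Y X' Y' A₁ B₁ A₂ B₂ : C} (h : OpticRep C X Y X' Y')
    (c : Comb2Rep C X' A₁ B₁ A₂ B₂ Y') : Comb2Rep C X A₁ B₁ A₂ B₂ Y where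
  M₁ := h.M ⊗ c.M₁
  M₂ := h.M ⊗ c.M₂
  f₁ := h.fwd ≫ (h.M ◁ c.f₁) ≫ (α_ h.M c.M₁ A₁).inv
  f₂ := (α_ h.M c.M₁ B₁).hom ≫ (h.M ◁ c.f₂) ≫ (α_ h.M c.M₂ A₂).inv
  f₃ := (α_ h.M c.M₂ B₂).hom ≫ (h.M ◁ c.f₃) ≫ h.bwd

open CartesianMonoidalCategory in
lemma lU_hom (X : C) : (λ_ X).hom = snd (𝟙_ C) X := by
  rw [← cancel_epi (λ_ X).inv]; simp

open CartesianMonoidalCategory in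
lemma rU_hom (X : C) : (ρ_ X).hom = fst X (𝟙_ C) := by
  rw [← cancel_epi (ρ_ X).inv]; simp

open CartesianMonoidalCategory in
/-- Invariant evaluation of an optic representative in a cartesian category. -/
def evalOptic {A B X Y : C} (r : OpticRep C A B X Y) : (A ⟶ X) × (A ⊗ Y ⟶ B) :=
  ⟨r.fwd ≫ snd _ _, ((r.fwd ≫ fst _ _) ▷ Y) ≫ r.bwd⟩

open CartesianMonoidalCategory in
lemma evalOptic_sound {A B X Y : C} : ∀ r s : OpticRep C A B X Y,
    OpticRel A B X Y r s → evalOptic r = evalOptic s := by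
  rintro _ _ ⟨f, a, b⟩
  refine Prod.ext (by simp [evalOptic]) ?_
  show (((a ≫ f ▷ _) ≫ fst _ _) ▷ _) ≫ b = ((a ≫ fst _ _) ▷ _) ≫ f ▷ _ ≫ b
  rw [Category.assoc, whiskerRight_fst, ← comp_whiskerRight_assoc]
  simp

open CartesianMonoidalCategory in
/-- Invariant evaluation of a 2-comb representative in a cartesian category. -/
def evalComb {X A₁ B₁ A₂ B₂ Y : C} (c : Comb2Rep C X A₁ B₁ A₂ B₂ Y) :
    (X ⟶ A₁) × ((X ⊗ B₁) ⟶ A₂) × (((X ⊗ B₁) ⊗ B₂) ⟶ Y) :=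
  ⟨c.f₁ ≫ snd _ _,
   ((c.f₁ ≫ fst _ _) ▷ B₁) ≫ c.f₂ ≫ snd _ _,
   ((((c.f₁ ≫ fst _ _) ▷ B₁) ≫ c.f₂ ≫ fst _ _) ▷ B₂) ≫ c.f₃⟩

open CartesianMonoidalCategory in
lemma evalComb_sound {X A₁ B₁ A₂ B₂ Y : C} : ∀ c d : Comb2Rep C X A₁ B₁ A₂ B₂ Y,
    Comb2Rel X A₁ B₁ A₂ B₂ Y c d → evalComb c = evalComb d := by
  rintro _ _ (⟨m, f₁, f₂, f₃⟩ | ⟨m, f₁, f₂, f₃⟩)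
  · have key : (f₁ ≫ m ▷ A₁ ≫ fst _ _) ▷ B₁ = ((f₁ ≫ fst _ _) ▷ B₁) ≫ m ▷ B₁ := by
      rw [whiskerRight_fst, ← comp_whiskerRight]
      simp
    simp only [evalComb, Category.assoc, key, whiskerRight_snd]
  · have key : ((f₁ ≫ fst _ _) ▷ B₁ ≫ f₂ ≫ m ▷ A₂ ≫ fst _ _) ▷ B₂ =
        (((f₁ ≫ fst _ _) ▷ B₁ ≫ f₂ ≫ fst _ _) ▷ B₂) ≫ m ▷ B₂ := by
      rw [whiskerRight_fst, ← comp_whiskerRight]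
      simp
    simp only [evalComb, Category.assoc, key, whiskerRight_snd]

open CartesianMonoidalCategory in
lemma wL_eq (X : C) {Y Z : C} (f : Y ⟶ Z) : X ◁ f = lift (fst X Y) (snd X Y ≫ f) := by
  ext <;> simp

open CartesianMonoidalCategory in
lemma wR_eq {Y Z : C} (f : Y ⟶ Z) (X : C) : f ▷ X = lift (fst Y X ≫ f) (snd Y X) := by
  ext <;> simp

open CartesianMonoidalCategory in
lemma aH_eq (X Y Z : C) : (α_ X Y Z).hom =
    lift (fst _ _ ≫ fst _ _) (lift (fst _ _ ≫ snd _ _) (snd _ _)) := by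
  ext <;> simp

open CartesianMonoidalCategory in
lemma aI_eq (X Y Z : C) : (α_ X Y Z).inv =
    lift (lift (fst _ _) (snd _ _ ≫ fst _ _)) (snd _ _ ≫ snd _ _) := by
  ext <;> simp

open CartesianMonoidalCategory in
lemma lU_inv (X : C) : (λ_ X).inv = lift (toUnit X) (𝟙 X) := by ext <;> simp

open CartesianMonoidalCategory in
lemma rU_inv (X : C) : (ρ_ X).inv = lift (𝟙 X) (toUnit X) := by ext <;> simp

set_option maxHeartbeats 1000000 in
set_option maxRecDepth 4000 in
open CartesianMonoidalCategory in
/-- If `B` is inhabited and a lens is lawful (a comonoid homomorphism for the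
sequential-use comonoid structure), then it satisfies the three lens laws. -/
theorem lawful_implies_lens_laws {A B : C} (get : A ⟶ B) (put : A ⊗ B ⟶ A)
    (k : 𝟙_ C ⟶ B)
    (hCounit : Quot.mk (OpticRel A A (𝟙_ C) (𝟙_ C))
        ((⟨A, lift (𝟙 A) (𝟙 A) ≫ (A ◁ get), put⟩ : OpticRep C A A B B).comp (epsRep B)) =
      Quot.mk (OpticRel A A (𝟙_ C) (𝟙_ C)) (epsRep A))
    (hDup : Quot.mk (Comb2Rel A B B B B A)
        (((deltaComb A).fill₁
            (⟨A, lift (𝟙 A) (𝟙 A) ≫ (A ◁ get), put⟩ : OpticRep C A A B B)).fill₂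
          (⟨A, lift (𝟙 A) (𝟙 A) ≫ (A ◁ get), put⟩ : OpticRep C A A B B)) =
      Quot.mk (Comb2Rel A B B B B A)
        (opticThenComb (⟨A, lift (𝟙 A) (𝟙 A) ≫ (A ◁ get), put⟩ : OpticRep C A A B B)
          (deltaComb B))) :
    lift (𝟙 A) (𝟙 A) ≫ (A ◁ get) ≫ put = 𝟙 A ∧
    put ≫ get = (toUnit A ▷ B) ≫ (λ_ B).hom ∧
    (put ▷ B) ≫ put = (((A ◁ toUnit B) ≫ (ρ_ A).hom) ▷ B) ≫ put := by
  have hC := congrArg (Quot.lift evalOptic (evalOptic_sound)) hCounit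
  have hD := congrArg (Quot.lift evalComb (evalComb_sound)) hDup
  simp only [Quot.lift_mk] at hC hD
  have hC2 := congrArg Prod.snd hC
  have hD2 := congrArg (fun p => p.2.1) hD
  have hD3 := congrArg (fun p => p.2.2) hD
  simp only [evalOptic, evalComb, OpticRep.comp, epsRep, deltaComb, Comb2Rep.fill₁,
    Comb2Rep.fill₂, opticThenComb] at hC2 hD2 hD3
  simp [wL_eq, wR_eq, aH_eq, aI_eq, lU_inv, rU_inv, lU_hom, rU_hom, comp_lift_assoc] at hC2 hD2 hD3
  refine ⟨?_, ?_, ?_⟩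
  · have h := congrArg (fun g => lift (𝟙 A) (toUnit A) ≫ g) hC2
    simp [comp_lift_assoc] at h
    simpa [wL_eq, comp_lift_assoc] using h
  · simpa [wR_eq, lU_hom] using hD2
  · simpa [wL_eq, wR_eq, rU_hom, comp_lift_assoc] using hD3
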